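/- Let n > 3. Consider the set of all decompositions of the all-ones matrix J into n permutation matrices, i.e., sets {π_1,…,π_n} of n permutations of {1,…,n} with Σ_{i=1}^n P_{π_i} = J. Form the graph on these decompositions in which two decompositions are adjacent if and only if they have at least one permutation in common. This graph is connected. -/

import Mathlib

/-- The permutation matrix of `π`: entry `(i,j)` is `1` if `π i = j`, else `0`. -/
def permMat (n : ℕ) (π : Equiv.Perm (Fin n)) : Matrix (Fin n) (Fin n) ℕ :=
  Matrix.of fun i j => if π i = j then 1 else 0

/-- Decompositions of the all-ones `n × n` matrix into `n` permutation matrices,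
viewed as sets of `n` permutations. -/
def Decomposition (n : ℕ) : Type :=
  {D : Finset (Equiv.Perm (Fin n)) //
    D.card = n ∧ ∑ π ∈ D, permMat n π = Matrix.of fun _ _ => 1}

/-- The graph on decompositions of the all-ones matrix into `n` permutation matrices,
with two decompositions adjacent iff they share at least one permutation. -/
def decompositionGraph (n : ℕ) : SimpleGraph (Decomposition n) where
  Adj D E := D ≠ E ∧ (D.1 ∩ E.1).Nonempty
  symm := ⟨fun _ _ h => ⟨h.1.symm, by rw [Finset.inter_comm]; exact h.2⟩⟩
  loopless := ⟨fun _ h => h.1 rfl⟩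

open Finset

section Aux

lemma permMat_row_sum (n : ℕ) (π : Equiv.Perm (Fin n)) (i : Fin n) :
    ∑ j, permMat n π i j = 1 := by
  simp [permMat, Finset.sum_ite_eq]

/-- A `0`/`1` matrix with all row and column sums equal to `k` is the sum of `k`
(distinct) permutation matrices.  (Hall's marriage theorem plus induction.) -/
lemma exists_decomp_of_rowcol (n : ℕ) (hn : 0 < n) (k : ℕ) (M : Matrix (Fin n) (Fin n) ℕ)
    (h01 : ∀ i j, M i j ≤ 1)
    (hrow : ∀ i, ∑ j, M i j = k) (hcol : ∀ j, ∑ i, M i j = k) :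
    ∃ S : Finset (Equiv.Perm (Fin n)), S.card = k ∧ ∑ π ∈ S, permMat n π = M := by
  induction k generalizing M with
  | zero =>
    refine ⟨∅, rfl, ?_⟩
    ext i j
    have h0 : M i j = 0 := by
      have := hrow i
      have hle : M i j ≤ ∑ j', M i j' := Finset.single_le_sum (fun _ _ => Nat.zero_le _) (mem_univ j)
      omega
    simp [Matrix.sum_apply, h0]
  | succ k ih =>
    classical
    have hcard : ∀ i, (univ.filter (fun j => M i j = 1)).card = k + 1 := by
      intro i
      have hstep : ∀ j, M i j = if M i j = 1 then 1 else 0 := by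
        intro j; have := h01 i j
        by_cases h : M i j = 1 <;> simp [h] <;> omega
      calc (univ.filter (fun j => M i j = 1)).card
          = ∑ j, if M i j = 1 then 1 else 0 := by rw [Finset.card_filter]
        _ = ∑ j, M i j := Finset.sum_congr rfl fun j _ => (hstep j).symm
        _ = k + 1 := hrow i
    set t : Fin n → Finset (Fin n) := fun i => univ.filter (fun j => M i j = 1) with ht
    have hall : ∀ s : Finset (Fin n), s.card ≤ (s.biUnion t).card := by
      intro s
      have key : (k+1) * s.card ≤ (k+1) * (s.biUnion t).card := by
        calc (k+1) * s.card = ∑ i ∈ s, (t i).card := by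
              rw [Finset.sum_congr rfl fun i _ => hcard i]; simp [mul_comm]
          _ = ∑ i ∈ s, ∑ j ∈ s.biUnion t, if j ∈ t i then 1 else 0 := by
              refine Finset.sum_congr rfl fun i hi => ?_
              rw [Finset.sum_ite_mem, Finset.inter_eq_right.2 (Finset.subset_biUnion_of_mem t hi)]
              simp
          _ = ∑ j ∈ s.biUnion t, ∑ i ∈ s, if j ∈ t i then 1 else 0 := Finset.sum_comm
          _ ≤ ∑ j ∈ s.biUnion t, (k+1) := by
              refine Finset.sum_le_sum fun j _ => ?_
              calc ∑ i ∈ s, (if j ∈ t i then 1 else 0) ≤ ∑ i ∈ s, M i j := by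
                    refine Finset.sum_le_sum fun i _ => ?_
                    simp only [ht, Finset.mem_filter, Finset.mem_univ, true_and]
                    split <;> omega
                _ ≤ ∑ i, M i j := Finset.sum_le_sum_of_subset (Finset.subset_univ s)
                _ = k + 1 := hcol j
          _ = (k+1) * (s.biUnion t).card := by simp [mul_comm]
      exact Nat.le_of_mul_le_mul_left key (Nat.succ_pos k)
    obtain ⟨f, hfinj, hf⟩ := (Finset.all_card_le_biUnion_card_iff_exists_injective t).1 hall
    have hfbij : Function.Bijective f := Finite.injective_iff_bijective.1 hfinj
    set π : Equiv.Perm (Fin n) := Equiv.ofBijective f hfbij with hπ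
    have hMπ : ∀ i, M i (π i) = 1 := by
      intro i
      have := hf i
      simp only [ht, Finset.mem_filter, Finset.mem_univ, true_and] at this
      exact this
    set M' : Matrix (Fin n) (Fin n) ℕ := Matrix.of (fun i j => M i j - permMat n π i j) with hM'
    have hle : ∀ i j, permMat n π i j ≤ M i j := by
      intro i j
      simp only [permMat, Matrix.of_apply]
      split
      · next h => rw [← h]; exact (hMπ i).ge
      · exact Nat.zero_le _
    have h01' : ∀ i j, M' i j ≤ 1 := fun i j => le_trans (Nat.sub_le _ _) (h01 i j)
    have hrow' : ∀ i, ∑ j, M' i j = k := by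
      intro i
      have hsub : ∑ j, M' i j = ∑ j, M i j - ∑ j, permMat n π i j := by
        simp only [hM', Matrix.of_apply]
        exact Finset.sum_tsub_distrib univ (fun j _ => hle i j)
      have hone : ∑ j, permMat n π i j = 1 := by
        simp [permMat, Finset.sum_ite_eq]
      rw [hsub, hrow i, hone]; omega
    have hcol' : ∀ j, ∑ i, M' i j = k := by
      intro j
      have hsub : ∑ i, M' i j = ∑ i, M i j - ∑ i, permMat n π i j := by
        simp only [hM', Matrix.of_apply]
        exact Finset.sum_tsub_distrib univ (fun i _ => hle i j)
      have hone : ∑ i, permMat n π i j = 1 := by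
        have hstep : ∀ i, permMat n π i j = if i = π.symm j then 1 else 0 := fun i => by
          simp [permMat, Equiv.apply_eq_iff_eq_symm_apply]
        rw [Finset.sum_congr rfl fun i _ => hstep i]
        simp
      rw [hsub, hcol j, hone]; omega
    obtain ⟨S, hScard, hSsum⟩ := ih M' h01' hrow' hcol'
    have hπS : π ∉ S := by
      intro hmem
      set i0 : Fin n := ⟨0, hn⟩
      have h1 : M' i0 (π i0) = 0 := by
        simp only [hM', Matrix.of_apply, permMat]
        rw [hMπ i0]
        simp
      have h2 : (1:ℕ) ≤ (∑ ρ ∈ S, permMat n ρ) i0 (π i0) := by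
        rw [Matrix.sum_apply]
        calc (1:ℕ) = permMat n π i0 (π i0) := by simp [permMat]
          _ ≤ ∑ ρ ∈ S, permMat n ρ i0 (π i0) :=
            Finset.single_le_sum (f := fun ρ => permMat n ρ i0 (π i0)) (fun _ _ => Nat.zero_le _) hmem
      rw [hSsum] at h2
      omega
    refine ⟨insert π S, ?_, ?_⟩
    · rw [Finset.card_insert_of_notMem hπS, hScard]
    · rw [Finset.sum_insert hπS, hSsum]
      ext i j
      show permMat n π i j + M' i j = M i j
      simp only [hM', Matrix.of_apply]
      have := hle i j
      omega

lemma card_of_sum_J (n : ℕ) (hn : 0 < n) (S : Finset (Equiv.Perm (Fin n)))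
    (h : ∑ π ∈ S, permMat n π = Matrix.of fun _ _ => 1) : S.card = n := by
  have h2 := congrArg (fun M : Matrix (Fin n) (Fin n) ℕ => ∑ i, ∑ j, M i j) h
  simp only [Matrix.sum_apply, Matrix.of_apply] at h2
  rw [show ∑ i, ∑ j, ∑ π ∈ S, permMat n π i j = ∑ i, ∑ π ∈ S, ∑ j, permMat n π i j
      from Finset.sum_congr rfl fun i _ => Finset.sum_comm] at h2
  simp only [permMat_row_sum] at h2
  simp only [Finset.sum_const, Finset.card_univ, Fintype.card_fin, smul_eq_mul, mul_one] at h2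
  exact Nat.eq_of_mul_eq_mul_left hn h2

lemma not_mem_of_entry_zero (n : ℕ) (S : Finset (Equiv.Perm (Fin n)))
    (M : Matrix (Fin n) (Fin n) ℕ) (hS : ∑ π ∈ S, permMat n π = M)
    (π : Equiv.Perm (Fin n)) (i : Fin n) (hz : M i (π i) = 0) : π ∉ S := by
  intro hmem
  have h2 : (1:ℕ) ≤ (∑ ρ ∈ S, permMat n ρ) i (π i) := by
    rw [Matrix.sum_apply]
    calc (1:ℕ) = permMat n π i (π i) := by simp [permMat]
      _ ≤ ∑ ρ ∈ S, permMat n ρ i (π i) :=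
        Finset.single_le_sum (f := fun ρ => permMat n ρ i (π i)) (fun _ _ => Nat.zero_le _) hmem
  rw [hS, hz] at h2
  omega

/-- Any two pointwise-disjoint permutations lie in a common decomposition of `J`. -/
lemma exists_decomposition_pair (n : ℕ) (hn : 3 < n) (α β : Equiv.Perm (Fin n))
    (hd : ∀ i, α i ≠ β i) :
    ∃ D : Finset (Equiv.Perm (Fin n)),
      (∑ π ∈ D, permMat n π = Matrix.of fun _ _ => 1) ∧ α ∈ D ∧ β ∈ D := by
  classical
  set M : Matrix (Fin n) (Fin n) ℕ :=
    Matrix.of (fun i j => if α i = j ∨ β i = j then 0 else 1) with hM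
  have h01 : ∀ i j, M i j ≤ 1 := by
    intro i j; simp only [hM, Matrix.of_apply]; split <;> omega
  have hrow : ∀ i, ∑ j, M i j = n - 2 := by
    intro i
    have h1 : ∑ j, M i j = (univ.filter (fun j => ¬ (α i = j ∨ β i = j))).card := by
      rw [Finset.card_filter]
      refine Finset.sum_congr rfl fun j _ => ?_
      simp only [hM, Matrix.of_apply]
      by_cases h : α i = j ∨ β i = j <;> simp [h]
    have h2 : univ.filter (fun j => ¬ (α i = j ∨ β i = j)) = univ \ {α i, β i} := by
      ext j
      simp [not_or, eq_comm, and_comm]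
    rw [h1, h2, Finset.card_sdiff_of_subset (Finset.subset_univ _), Finset.card_pair (hd i)]
    simp
  have hcol : ∀ j, ∑ i, M i j = n - 2 := by
    intro j
    have hd' : α.symm j ≠ β.symm j := by
      intro h
      apply hd (α.symm j)
      rw [Equiv.apply_symm_apply, h, Equiv.apply_symm_apply]
    have h1 : ∑ i, M i j = (univ.filter (fun i => ¬ (i = α.symm j ∨ i = β.symm j))).card := by
      rw [Finset.card_filter]
      refine Finset.sum_congr rfl fun i _ => ?_
      simp only [hM, Matrix.of_apply, Equiv.apply_eq_iff_eq_symm_apply]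
      by_cases h : i = α.symm j ∨ i = β.symm j <;> simp [h]
    have h2 : univ.filter (fun i => ¬ (i = α.symm j ∨ i = β.symm j)) = univ \ {α.symm j, β.symm j} := by
      ext i
      simp [not_or]
    rw [h1, h2, Finset.card_sdiff_of_subset (Finset.subset_univ _), Finset.card_pair hd']
    simp
  obtain ⟨S, hScard, hSsum⟩ := exists_decomp_of_rowcol n (by omega) (n-2) M h01 hrow hcol
  have i0 : Fin n := ⟨0, by omega⟩
  have hαS : α ∉ S := by
    refine not_mem_of_entry_zero n S M hSsum α i0 ?_
    simp [hM]
  have hβS : β ∉ S := by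
    refine not_mem_of_entry_zero n S M hSsum β i0 ?_
    simp [hM]
  have hαβ : α ≠ β := fun h => hd i0 (by rw [h])
  have hαins : α ∉ insert β S := by
    simp [Finset.mem_insert, hαβ, hαS]
  refine ⟨insert α (insert β S), ?_, Finset.mem_insert_self _ _,
    Finset.mem_insert_of_mem (Finset.mem_insert_self _ _)⟩
  rw [Finset.sum_insert hαins, Finset.sum_insert hβS, hSsum]
  ext i j
  show permMat n α i j + (permMat n β i j + M i j) = 1
  simp only [permMat, hM, Matrix.of_apply]
  by_cases h1 : α i = j <;> by_cases h2 : β i = j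
  · exact absurd (h1.trans h2.symm) (hd i)
  · simp [h1, h2]
  · simp [h1, h2]
  · simp [h1, h2]

end Aux

section Coset

variable (n : ℕ) [NeZero n]

/-- The permutation `x ↦ σ x + c`. -/
def shiftPerm (σ : Equiv.Perm (Fin n)) (c : Fin n) : Equiv.Perm (Fin n) :=
  σ.trans (Equiv.addRight c)

lemma shiftPerm_apply (σ : Equiv.Perm (Fin n)) (c i : Fin n) :
    shiftPerm n σ c i = σ i + c := rfl

lemma shiftPerm_zero (σ : Equiv.Perm (Fin n)) : shiftPerm n σ 0 = σ := by
  ext i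
  simp [shiftPerm_apply]

lemma shiftPerm_injective (σ : Equiv.Perm (Fin n)) :
    Function.Injective (shiftPerm n σ) := by
  intro c c' h
  have hpos : 0 < n := Nat.pos_of_ne_zero (NeZero.ne n)
  have := congrArg (fun π : Equiv.Perm (Fin n) => π ⟨0, hpos⟩) h
  simp only [shiftPerm_apply] at this
  exact add_left_cancel this

/-- The "coset" decomposition `{x ↦ σ x + c : c}`. -/
def cosetDecomp (σ : Equiv.Perm (Fin n)) : Decomposition n := by
  refine ⟨univ.image (shiftPerm n σ), ?_, ?_⟩
  case refine_2 =>
    ext i j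
    rw [Matrix.sum_apply,
      Finset.sum_image (fun c _ c' _ h => shiftPerm_injective n σ h)]
    have hstep : ∀ c : Fin n, permMat n (shiftPerm n σ c) i j = if c = j - σ i then 1 else 0 := by
      intro c
      simp only [permMat, Matrix.of_apply, shiftPerm_apply]
      congr 1
      rw [eq_iff_iff]
      constructor
      · intro h; rw [← h]; abel
      · intro h; rw [h]; abel
    rw [Finset.sum_congr rfl fun c _ => hstep c]
    simp
  case refine_1 =>
    refine card_of_sum_J n (Nat.pos_of_ne_zero (NeZero.ne n)) _ ?_
    ext i j
    rw [Matrix.sum_apply,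
      Finset.sum_image (fun c _ c' _ h => shiftPerm_injective n σ h)]
    have hstep : ∀ c : Fin n, permMat n (shiftPerm n σ c) i j = if c = j - σ i then 1 else 0 := by
      intro c
      simp only [permMat, Matrix.of_apply, shiftPerm_apply]
      congr 1
      rw [eq_iff_iff]
      constructor
      · intro h; rw [← h]; abel
      · intro h; rw [h]; abel
    rw [Finset.sum_congr rfl fun c _ => hstep c]
    simp

lemma shiftPerm_mem_cosetDecomp (σ : Equiv.Perm (Fin n)) (c : Fin n) :
    shiftPerm n σ c ∈ (cosetDecomp n σ).1 :=
  Finset.mem_image.2 ⟨c, mem_univ _, rfl⟩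

lemma self_mem_cosetDecomp (σ : Equiv.Perm (Fin n)) : σ ∈ (cosetDecomp n σ).1 := by
  have := shiftPerm_mem_cosetDecomp n σ 0
  rwa [shiftPerm_zero] at this

end Coset

section Reach

lemma reachable_of_mem (n : ℕ) (D E : Decomposition n) (π : Equiv.Perm (Fin n))
    (hD : π ∈ D.1) (hE : π ∈ E.1) : (decompositionGraph n).Reachable D E := by
  classical
  by_cases h : D = E
  · exact h ▸ SimpleGraph.Reachable.refl D
  · exact SimpleGraph.Adj.reachable ⟨h, ⟨π, Finset.mem_inter.2 ⟨hD, hE⟩⟩⟩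

lemma coset_reachable (n : ℕ) [NeZero n] (hn : 3 < n) (σ τ : Equiv.Perm (Fin n)) (c : Fin n)
    (h : ∀ i, τ i - σ i ≠ c) :
    (decompositionGraph n).Reachable (cosetDecomp n σ) (cosetDecomp n τ) := by
  have hdisj : ∀ i, σ i ≠ shiftPerm n τ (-c) i := by
    intro i heq
    apply h i
    rw [shiftPerm_apply] at heq
    rw [heq]
    abel
  obtain ⟨D, hsum, hα, hβ⟩ := exists_decomposition_pair n hn σ (shiftPerm n τ (-c)) hdisj
  have DD : Decomposition n := ⟨D, card_of_sum_J n (by omega) D hsum, hsum⟩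
  refine (reachable_of_mem n (cosetDecomp n σ) ⟨D, card_of_sum_J n (by omega) D hsum, hsum⟩ σ
      (self_mem_cosetDecomp n σ) hα).trans ?_
  exact reachable_of_mem n _ (cosetDecomp n τ) (shiftPerm n τ (-c)) hβ
    (shiftPerm_mem_cosetDecomp n τ (-c))

lemma not_surj_exists (n : ℕ) (g : Fin n → Fin n) (hg : ¬ Function.Surjective g) :
    ∃ c, ∀ i, g i ≠ c := by
  rw [Function.Surjective] at hg
  push_neg at hg
  obtain ⟨c, hc⟩ := hg
  exact ⟨c, hc⟩

lemma not_surj_of_not_inj (n : ℕ) (g : Fin n → Fin n) (i j : Fin n) (hij : i ≠ j)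
    (hg : g i = g j) : ¬ Function.Surjective g := fun hs =>
  hij ((Finite.injective_iff_surjective.2 hs) hg)

lemma coset_to_one (n : ℕ) [NeZero n] (hn : 3 < n) (σ : Equiv.Perm (Fin n)) :
    (decompositionGraph n).Reachable (cosetDecomp n σ) (cosetDecomp n 1) := by
  classical
  by_cases hs : Function.Surjective (fun i => σ i - i)
  · -- hard case: go through a transposition
    set p : Fin n := ⟨0, by omega⟩
    set q : Fin n := ⟨1, by omega⟩
    set r : Fin n := ⟨2, by omega⟩
    set s : Fin n := ⟨3, by omega⟩
    have hpq : p ≠ q := by simp [p, q, Fin.mk.injEq]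
    have hrs : r ≠ s := by simp [r, s, Fin.mk.injEq]
    have hrp : r ≠ p := by simp [r, p, Fin.mk.injEq]
    have hrq : r ≠ q := by simp [r, q, Fin.mk.injEq]
    have hsp : s ≠ p := by simp [s, p, Fin.mk.injEq]
    have hsq : s ≠ q := by simp [s, q, Fin.mk.injEq]
    set τ : Equiv.Perm (Fin n) := Equiv.swap p q with hτ
    -- step 1 : coset σ to coset τ
    obtain ⟨i0, hi0⟩ := hs (σ p - q)
    simp only at hi0
    have hi0p : i0 ≠ p := by
      intro h
      rw [h] at hi0
      exact hpq (sub_right_inj.mp hi0)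
    have hi0q : i0 ≠ q := by
      intro h
      rw [h] at hi0
      have : σ q = σ p := sub_left_inj.mp hi0
      exact hpq (σ.injective this).symm
    have hgval : τ i0 - σ i0 = τ p - σ p := by
      rw [hτ]
      rw [Equiv.swap_apply_of_ne_of_ne hi0p hi0q, Equiv.swap_apply_left]
      have : σ i0 - i0 = σ p - q := hi0
      -- i0 - σ i0 = q - σ p
      have h2 : i0 - σ i0 = q - σ p := by
        have := congrArg Neg.neg this
        simpa [neg_sub] using this
      rw [h2]
    have hns1 : ¬ Function.Surjective (fun i => τ i - σ i) :=
      not_surj_of_not_inj n _ i0 p hi0p hgval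
    obtain ⟨c1, hc1⟩ := not_surj_exists n _ hns1
    have step1 := coset_reachable n hn σ τ c1 hc1
    -- step 2 : coset τ to coset 1
    have hgval2 : (1 : Equiv.Perm (Fin n)) r - τ r = (1 : Equiv.Perm (Fin n)) s - τ s := by
      rw [hτ]
      rw [Equiv.swap_apply_of_ne_of_ne hrp hrq, Equiv.swap_apply_of_ne_of_ne hsp hsq]
      simp
    have hns2 : ¬ Function.Surjective (fun i => (1 : Equiv.Perm (Fin n)) i - τ i) :=
      not_surj_of_not_inj n _ r s hrs hgval2
    obtain ⟨c2, hc2⟩ := not_surj_exists n _ hns2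
    exact step1.trans (coset_reachable n hn τ 1 c2 hc2)
  · obtain ⟨c, hc⟩ := not_surj_exists n _ hs
    refine coset_reachable n hn σ 1 (-c) ?_
    intro i h
    apply hc i
    have : (1 : Equiv.Perm (Fin n)) i = i := rfl
    rw [this] at h
    -- i - σ i = -c  →  σ i - i = c
    have := congrArg Neg.neg h
    simpa [neg_sub] using this

end Reach

/-- For `n > 3`, the graph on decompositions of the all-ones matrix into `n` permutation
matrices (adjacent iff sharing a common permutation) is connected. -/
theorem decompositionGraph_connected (n : ℕ) (hn : 3 < n) :
    (decompositionGraph n).Connected := by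
  haveI : NeZero n := ⟨by omega⟩
  have key : ∀ D : Decomposition n, (decompositionGraph n).Reachable D (cosetDecomp n 1) := by
    intro D
    have hne : D.1.Nonempty := Finset.card_pos.1 (by rw [D.2.1]; omega)
    obtain ⟨σ, hσ⟩ := hne
    exact (reachable_of_mem n D (cosetDecomp n σ) σ hσ (self_mem_cosetDecomp n σ)).trans
      (coset_to_one n hn σ)
  haveI : Nonempty (Decomposition n) := ⟨cosetDecomp n 1⟩
  exact ⟨fun D E => (key D).trans (key E).symm⟩
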